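/- Let A = A₀ ⊕ A₁ be a supercommutative superalgebra over a field of characteristic ≠ 2. Then A is Noetherian (its super-ideals satisfy the ascending chain condition) if and only if A₀ is a Noetherian commutative ring and A₁ is a finitely generated A₀-module. -/
import Mathlib


/-- A super-ideal of the superalgebra `A` (with grading `A0, A1`): a graded two-sided ideal. -/
def IsSuperIdeal (k A : Type) [Field k] [Ring A] [Algebra k A]
    (A0 A1 I : Submodule k A) : Prop :=
  (∀ x ∈ I, ∀ a : A, a * x ∈ I ∧ x * a ∈ I) ∧
  (∀ a ∈ A0, ∀ b ∈ A1, a + b ∈ I → a ∈ I ∧ b ∈ I)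

/-- `A` is Noetherian as a superalgebra: its super-ideals satisfy the ascending chain
condition. -/
def SuperNoetherian (k A : Type) [Field k] [Ring A] [Algebra k A]
    (A0 A1 : Submodule k A) : Prop :=
  ∀ f : ℕ → Submodule k A, (∀ n, IsSuperIdeal k A A0 A1 (f n)) → Monotone f →
    ∃ n, ∀ m, n ≤ m → f m = f n

lemma aux_decomp {k A : Type} [Field k] [Ring A] [Algebra k A]
    {A0 A1 : Submodule k A} (hsum : A0 ⊔ A1 = ⊤) (x : A) :
    ∃ a ∈ A0, ∃ b ∈ A1, x = a + b := by
  have hx : x ∈ A0 ⊔ A1 := by rw [hsum]; trivial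
  obtain ⟨a, ha, b, hb, h⟩ := Submodule.mem_sup.mp hx
  exact ⟨a, ha, b, hb, h.symm⟩

lemma aux_uniq {k A : Type} [Field k] [Ring A] [Algebra k A]
    {A0 A1 : Submodule k A} (hdisj : A0 ⊓ A1 = ⊥)
    {u v : A} (hu : u ∈ A0) (hv : v ∈ A1) (h : u + v = 0) : u = 0 ∧ v = 0 := by
  have h1 : u = -v := eq_neg_of_add_eq_zero_left h
  have h2 : u ∈ A0 ⊓ A1 := ⟨hu, h1 ▸ A1.neg_mem hv⟩
  rw [hdisj] at h2
  have hu0 : u = 0 := h2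
  refine ⟨hu0, ?_⟩
  rw [hu0, zero_add] at h
  exact h

lemma aux_superIdeal {k A : Type} [Field k] [Ring A] [Algebra k A]
    {A0 A1 : Submodule k A}
    (hsum : A0 ⊔ A1 = ⊤) (hdisj : A0 ⊓ A1 = ⊥)
    (hcentral : ∀ a ∈ A0, ∀ x : A, a * x = x * a)
    (hanti : ∀ a ∈ A1, ∀ b ∈ A1, a * b = -(b * a))
    (P Q : Submodule k A) (hP : P ≤ A0) (hQ : Q ≤ A1)
    (hL0 : ∀ c ∈ A0, ∀ y ∈ P ⊔ Q, c * y ∈ P ⊔ Q)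
    (hL1 : ∀ c ∈ A1, ∀ y ∈ P ⊔ Q, c * y ∈ P ⊔ Q) :
    IsSuperIdeal k A A0 A1 (P ⊔ Q) := by
  have hL : ∀ c : A, ∀ y ∈ P ⊔ Q, c * y ∈ P ⊔ Q := by
    intro c y hy
    obtain ⟨c0, hc0, c1, hc1, rfl⟩ := aux_decomp hsum c
    rw [add_mul]
    exact Submodule.add_mem _ (hL0 c0 hc0 y hy) (hL1 c1 hc1 y hy)
  constructor
  · intro y hy c
    refine ⟨hL c y hy, ?_⟩
    obtain ⟨p, hp, q, hq, rfl⟩ := Submodule.mem_sup.mp hy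
    rw [add_mul]
    refine Submodule.add_mem _ ?_ ?_
    · rw [hcentral p (hP hp) c]
      exact hL c p (Submodule.mem_sup_left hp)
    · obtain ⟨c0, hc0, c1, hc1, rfl⟩ := aux_decomp hsum c
      rw [mul_add, ← hcentral c0 hc0 q, hanti q (hQ hq) c1 hc1]
      refine Submodule.add_mem _ (hL c0 q (Submodule.mem_sup_right hq))
        (Submodule.neg_mem _ (hL c1 q (Submodule.mem_sup_right hq)))
  · intro a ha b hb hab
    obtain ⟨p, hp, q, hq, hpq⟩ := Submodule.mem_sup.mp hab
    have h0 : (a - p) + (b - q) = 0 := by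
      rw [sub_add_sub_comm, hpq, sub_self]
    obtain ⟨h1, h2⟩ := aux_uniq hdisj (A0.sub_mem ha (hP hp)) (A1.sub_mem hb (hQ hq)) h0
    have ha' : a = p := eq_of_sub_eq_zero h1
    have hb' : b = q := eq_of_sub_eq_zero h2
    exact ⟨ha' ▸ Submodule.mem_sup_left hp, hb' ▸ Submodule.mem_sup_right hq⟩

lemma fwd1 {k A : Type} [Field k] [Ring A] [Algebra k A]
    {A0 A1 : Submodule k A}
    (hsum : A0 ⊔ A1 = ⊤) (hdisj : A0 ⊓ A1 = ⊥)
    (h01 : ∀ a ∈ A0, ∀ b ∈ A1, a * b ∈ A1)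
    (h11 : ∀ a ∈ A1, ∀ b ∈ A1, a * b ∈ A0)
    (hcentral : ∀ a ∈ A0, ∀ x : A, a * x = x * a)
    (hanti : ∀ a ∈ A1, ∀ b ∈ A1, a * b = -(b * a))
    (hN : SuperNoetherian k A A0 A1)
    (f : ℕ → Submodule k A)
    (hf : ∀ n, f n ≤ A0 ∧ ∀ a ∈ A0, ∀ x ∈ f n, a * x ∈ f n)
    (hmono : Monotone f) :
    ∃ n, ∀ m, n ≤ m → f m = f n := by
  set T : ℕ → Submodule k A :=
    fun n => Submodule.span k {z | ∃ a ∈ A1, ∃ x ∈ f n, z = a * x} with hT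
  have hQ : ∀ n, T n ≤ A1 := by
    intro n
    rw [hT]
    refine Submodule.span_le.mpr ?_
    rintro z ⟨a, ha, x, hx, rfl⟩
    show a * x ∈ A1
    rw [← hcentral x ((hf n).1 hx) a]
    exact h01 x ((hf n).1 hx) a ha
  have hsuper : ∀ n, IsSuperIdeal k A A0 A1 (f n ⊔ T n) := by
    intro n
    refine aux_superIdeal hsum hdisj hcentral hanti _ _ (hf n).1 (hQ n) ?_ ?_
    · -- left mult by A0
      intro c hc y hy
      obtain ⟨p, hp, q, hq, rfl⟩ := Submodule.mem_sup.mp hy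
      rw [mul_add]
      refine Submodule.add_mem _ (Submodule.mem_sup_left ((hf n).2 c hc p hp)) ?_
      refine Submodule.mem_sup_right ?_
      refine Submodule.span_induction ?_ ?_ ?_ ?_ hq
        (p := fun x _ => c * x ∈ T n)
      · rintro z ⟨a, ha, x, hx, rfl⟩
        rw [← mul_assoc]
        exact Submodule.subset_span ⟨c * a, h01 c hc a ha, x, hx, rfl⟩
      · show c * 0 ∈ _; rw [mul_zero]; exact Submodule.zero_mem _
      · intro x y _ _ hx hy; show c * (x + y) ∈ _; rw [mul_add]
        exact Submodule.add_mem _ hx hy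
      · intro t x _ hx; show c * (t • x) ∈ _; rw [mul_smul_comm]
        exact Submodule.smul_mem _ t hx
    · -- left mult by A1
      intro c hc y hy
      obtain ⟨p, hp, q, hq, rfl⟩ := Submodule.mem_sup.mp hy
      rw [mul_add]
      refine Submodule.add_mem _
        (Submodule.mem_sup_right (Submodule.subset_span ⟨c, hc, p, hp, rfl⟩)) ?_
      refine Submodule.span_induction ?_ ?_ ?_ ?_ hq
        (p := fun x _ => c * x ∈ f n ⊔ T n)
      · rintro z ⟨a, ha, x, hx, rfl⟩
        rw [← mul_assoc]
        exact Submodule.mem_sup_left ((hf n).2 (c * a) (h11 c hc a ha) x hx)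
      · show c * 0 ∈ _; rw [mul_zero]; exact Submodule.zero_mem _
      · intro x y _ _ hx hy; show c * (x + y) ∈ _; rw [mul_add]
        exact Submodule.add_mem _ hx hy
      · intro t x _ hx; show c * (t • x) ∈ _; rw [mul_smul_comm]
        exact Submodule.smul_mem _ t hx
  have hFmono : Monotone (fun n => f n ⊔ T n) := by
    intro a b hab
    refine sup_le_sup (hmono hab) ?_
    refine Submodule.span_mono ?_
    rintro z ⟨u, hu, x, hx, rfl⟩
    exact ⟨u, hu, x, hmono hab hx, rfl⟩
  obtain ⟨n, hn⟩ := hN _ hsuper hFmono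
  refine ⟨n, fun m hm => ?_⟩
  refine le_antisymm ?_ (hmono hm)
  intro x hx
  have hx' : x ∈ f n ⊔ T n := (hn m hm) ▸ Submodule.mem_sup_left hx
  obtain ⟨p, hp, q, hq, hpq⟩ := Submodule.mem_sup.mp hx'
  have h0 : (p - x) + q = 0 := by rw [sub_add_eq_add_sub, hpq, sub_self]
  obtain ⟨h1, _⟩ := aux_uniq hdisj (A0.sub_mem ((hf n).1 hp) ((hf m).1 hx))
    (hQ n hq) h0
  have : p = x := eq_of_sub_eq_zero h1
  exact this ▸ hp

lemma fwd2 {k A : Type} [Field k] [Ring A] [Algebra k A]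
    {A0 A1 : Submodule k A}
    (hsum : A0 ⊔ A1 = ⊤) (hdisj : A0 ⊓ A1 = ⊥)
    (hone : (1 : A) ∈ A0)
    (h00 : ∀ a ∈ A0, ∀ b ∈ A0, a * b ∈ A0)
    (h01 : ∀ a ∈ A0, ∀ b ∈ A1, a * b ∈ A1)
    (h11 : ∀ a ∈ A1, ∀ b ∈ A1, a * b ∈ A0)
    (hcentral : ∀ a ∈ A0, ∀ x : A, a * x = x * a)
    (hanti : ∀ a ∈ A1, ∀ b ∈ A1, a * b = -(b * a))
    (hN : SuperNoetherian k A A0 A1) :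
    ∃ s : Finset A, (s : Set A) ⊆ (A1 : Set A) ∧
      A1 ≤ Submodule.span k {z | ∃ a ∈ A0, ∃ b ∈ (s : Set A), z = a * b} := by
  set Ms : Finset A → Submodule k A :=
    fun s => Submodule.span k {z | ∃ a ∈ A0, ∃ b ∈ (s : Set A), z = a * b} with hMs
  set Ps : Finset A → Submodule k A :=
    fun s => Submodule.span k {z | ∃ a ∈ A1, ∃ b ∈ (s : Set A), z = a * b} with hPs
  by_contra hcon
  push_neg at hcon
  have H : ∀ s : Finset A, (s : Set A) ⊆ (A1 : Set A) → ∃ b, b ∈ A1 ∧ b ∉ Ms s :=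
    fun s hs => SetLike.not_le_iff_exists.mp (hcon s hs)
  classical
  obtain ⟨next, hnext⟩ : ∃ next : Finset A → A,
      ∀ s : Finset A, ∀ _ : (s : Set A) ⊆ (A1 : Set A),
        next s ∈ A1 ∧ next s ∉ Ms s := by
    refine ⟨fun s => if h : (s : Set A) ⊆ (A1 : Set A) then (H s h).choose else 0,
      fun s h => ?_⟩
    dsimp only
    rw [dif_pos h]
    exact (H s h).choose_spec
  obtain ⟨g, hg0, hgsucc⟩ : ∃ g : ℕ → Finset A, g 0 = ∅ ∧
      ∀ n, g (n + 1) = insert (next (g n)) (g n) :=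
    ⟨fun n => Nat.rec ∅ (fun _ t => insert (next t) t) n, rfl, fun _ => rfl⟩
  have hgsub : ∀ n, (↑(g n) : Set A) ⊆ (A1 : Set A) := by
    intro n
    induction n with
    | zero => rw [hg0]; simp
    | succ n ih =>
      rw [hgsucc, Finset.coe_insert, Set.insert_subset_iff]
      exact ⟨(hnext (g n) ih).1, ih⟩
  have hgmono : ∀ n, g n ⊆ g (n + 1) := by
    intro n; rw [hgsucc]; exact Finset.subset_insert _ _
  have hsetmono : ∀ {s t : Finset A}, s ⊆ t →
      ∀ (B : Submodule k A), Submodule.span k {z | ∃ a ∈ B, ∃ b ∈ (s : Set A), z = a * b} ≤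
        Submodule.span k {z | ∃ a ∈ B, ∃ b ∈ (t : Set A), z = a * b} := by
    intro s t hst B
    refine Submodule.span_mono ?_
    rintro z ⟨a, ha, b, hb, rfl⟩
    exact ⟨a, ha, b, hst hb, rfl⟩
  have hPle : ∀ n, Ps (g n) ≤ A0 := by
    intro n
    refine Submodule.span_le.mpr ?_
    rintro z ⟨a, ha, b, hb, rfl⟩
    exact h11 a ha b (hgsub n hb)
  have hQle : ∀ n, Ms (g n) ≤ A1 := by
    intro n
    refine Submodule.span_le.mpr ?_
    rintro z ⟨a, ha, b, hb, rfl⟩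
    exact h01 a ha b (hgsub n hb)
  have hsuper : ∀ n, IsSuperIdeal k A A0 A1 (Ps (g n) ⊔ Ms (g n)) := by
    intro n
    refine aux_superIdeal hsum hdisj hcentral hanti _ _ (hPle n) (hQle n) ?_ ?_
    · intro c hc y hy
      obtain ⟨p, hp, q, hq, rfl⟩ := Submodule.mem_sup.mp hy
      rw [mul_add]
      refine Submodule.add_mem _ ?_ ?_
      · refine Submodule.span_induction ?_ ?_ ?_ ?_ hp
          (p := fun x _ => c * x ∈ Ps (g n) ⊔ Ms (g n))
        · rintro z ⟨a, ha, b, hb, rfl⟩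
          rw [← mul_assoc]
          exact Submodule.mem_sup_left (Submodule.subset_span ⟨c * a, h01 c hc a ha, b, hb, rfl⟩)
        · show c * 0 ∈ _; rw [mul_zero]; exact Submodule.zero_mem _
        · intro x y _ _ hx hy; show c * (x + y) ∈ _; rw [mul_add]
          exact Submodule.add_mem _ hx hy
        · intro t x _ hx; show c * (t • x) ∈ _; rw [mul_smul_comm]
          exact Submodule.smul_mem _ t hx
      · refine Submodule.span_induction ?_ ?_ ?_ ?_ hq
          (p := fun x _ => c * x ∈ Ps (g n) ⊔ Ms (g n))
        · rintro z ⟨a, ha, b, hb, rfl⟩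
          rw [← mul_assoc]
          exact Submodule.mem_sup_right (Submodule.subset_span ⟨c * a, h00 c hc a ha, b, hb, rfl⟩)
        · show c * 0 ∈ _; rw [mul_zero]; exact Submodule.zero_mem _
        · intro x y _ _ hx hy; show c * (x + y) ∈ _; rw [mul_add]
          exact Submodule.add_mem _ hx hy
        · intro t x _ hx; show c * (t • x) ∈ _; rw [mul_smul_comm]
          exact Submodule.smul_mem _ t hx
    · intro c hc y hy
      obtain ⟨p, hp, q, hq, rfl⟩ := Submodule.mem_sup.mp hy
      rw [mul_add]
      refine Submodule.add_mem _ ?_ ?_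
      · refine Submodule.span_induction ?_ ?_ ?_ ?_ hp
          (p := fun x _ => c * x ∈ Ps (g n) ⊔ Ms (g n))
        · rintro z ⟨a, ha, b, hb, rfl⟩
          rw [← mul_assoc]
          exact Submodule.mem_sup_right (Submodule.subset_span ⟨c * a, h11 c hc a ha, b, hb, rfl⟩)
        · show c * 0 ∈ _; rw [mul_zero]; exact Submodule.zero_mem _
        · intro x y _ _ hx hy; show c * (x + y) ∈ _; rw [mul_add]
          exact Submodule.add_mem _ hx hy
        · intro t x _ hx; show c * (t • x) ∈ _; rw [mul_smul_comm]
          exact Submodule.smul_mem _ t hx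
      · refine Submodule.span_induction ?_ ?_ ?_ ?_ hq
          (p := fun x _ => c * x ∈ Ps (g n) ⊔ Ms (g n))
        · rintro z ⟨a, ha, b, hb, rfl⟩
          rw [← mul_assoc]
          have hca : c * a ∈ A1 := by
            rw [← hcentral a ha c]
            exact h01 a ha c hc
          exact Submodule.mem_sup_left (Submodule.subset_span ⟨c * a, hca, b, hb, rfl⟩)
        · show c * 0 ∈ _; rw [mul_zero]; exact Submodule.zero_mem _
        · intro x y _ _ hx hy; show c * (x + y) ∈ _; rw [mul_add]
          exact Submodule.add_mem _ hx hy
        · intro t x _ hx; show c * (t • x) ∈ _; rw [mul_smul_comm]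
          exact Submodule.smul_mem _ t hx
  have hFmono : Monotone (fun n => Ps (g n) ⊔ Ms (g n)) := by
    refine monotone_nat_of_le_succ ?_
    intro n
    exact sup_le_sup (hsetmono (hgmono n) A1) (hsetmono (hgmono n) A0)
  obtain ⟨n, hn⟩ := hN _ hsuper hFmono
  -- derive a contradiction
  set b : A := next (g n) with hb
  have hb1 : b ∈ A1 := (hnext (g n) (hgsub n)).1
  have hb2 : b ∉ Ms (g n) := (hnext (g n) (hgsub n)).2
  have hbmem : b ∈ Ms (g (n + 1)) := by
    refine Submodule.subset_span ⟨1, hone, b, ?_, (one_mul b).symm⟩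
    rw [hgsucc]
    exact Finset.mem_coe.mpr (Finset.mem_insert_self _ _)
  have hbF : b ∈ Ps (g n) ⊔ Ms (g n) := by
    rw [← hn (n + 1) (Nat.le_succ n)]
    exact Submodule.mem_sup_right hbmem
  obtain ⟨p, hp, q, hq, hpq⟩ := Submodule.mem_sup.mp hbF
  have h0 : p + (q - b) = 0 := by rw [← add_sub_assoc, hpq, sub_self]
  obtain ⟨h1, h2⟩ := aux_uniq hdisj (hPle n hp) (A1.sub_mem (hQle n hq) hb1) h0
  have : q = b := by
    have := eq_of_sub_eq_zero h2
    exact this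
  exact hb2 (this ▸ hq)

lemma bwd {k A : Type} [Field k] [Ring A] [Algebra k A]
    {A0 A1 : Submodule k A}
    (hsum : A0 ⊔ A1 = ⊤) (hdisj : A0 ⊓ A1 = ⊥)
    (hone : (1 : A) ∈ A0)
    (h00 : ∀ a ∈ A0, ∀ b ∈ A0, a * b ∈ A0)
    (h01 : ∀ a ∈ A0, ∀ b ∈ A1, a * b ∈ A1)
    (hacc : ∀ f : ℕ → Submodule k A,
        (∀ n, f n ≤ A0 ∧ ∀ a ∈ A0, ∀ x ∈ f n, a * x ∈ f n) → Monotone f →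
        ∃ n, ∀ m, n ≤ m → f m = f n)
    (s : Finset A) (hs1 : (s : Set A) ⊆ (A1 : Set A))
    (hs2 : A1 ≤ Submodule.span k {z | ∃ a ∈ A0, ∃ b ∈ (s : Set A), z = a * b}) :
    SuperNoetherian k A A0 A1 := by
  set S : Subalgebra k A := A0.toSubalgebra hone (fun x y hx hy => h00 x hx y hy) with hS
  have hmemS : ∀ x : A, x ∈ S ↔ x ∈ A0 := fun x => Submodule.mem_toSubalgebra
  -- the even part is a Noetherian ring
  haveI hNR : IsNoetherianRing ↥S := by
    rw [isNoetherianRing_iff, ← monotone_stabilizes_iff_noetherian]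
    intro J
    have hcond : ∀ n, (Submodule.map (S.val : ↥S →ₗ[k] A) ((J n).restrictScalars k)) ≤ A0 ∧
        ∀ a ∈ A0, ∀ x ∈ (Submodule.map (S.val : ↥S →ₗ[k] A) ((J n).restrictScalars k)),
          a * x ∈ (Submodule.map (S.val : ↥S →ₗ[k] A) ((J n).restrictScalars k)) := by
      intro n
      constructor
      · rintro x hx
        obtain ⟨j, _, rfl⟩ := Submodule.mem_map.mp hx
        exact (hmemS _).mp j.2
      · intro a ha x hx
        obtain ⟨j, hj, rfl⟩ := Submodule.mem_map.mp hx
        refine Submodule.mem_map.mpr ⟨⟨a, (hmemS a).mpr ha⟩ * j, ?_, rfl⟩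
        exact Ideal.mul_mem_left (J n) _ hj
    have hmono : Monotone (fun n =>
        Submodule.map (S.val : ↥S →ₗ[k] A) ((J n).restrictScalars k)) := by
      intro a b hab
      exact Submodule.map_mono (fun x hx => J.monotone hab hx)
    obtain ⟨n, hn⟩ := hacc _ hcond hmono
    refine ⟨n, fun m hm => ?_⟩
    have h2 := Submodule.map_injective_of_injective
      (f := (S.val : ↥S →ₗ[k] A)) Subtype.val_injective (hn m hm)
    exact (Submodule.restrictScalars_injective k _ _ h2).symm
  -- the odd part as a finitely generated module over the even part
  set N1 : Submodule ↥S A :=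
    { carrier := (A1 : Set A)
      add_mem' := fun {a b} ha hb => A1.add_mem ha hb
      zero_mem' := A1.zero_mem
      smul_mem' := fun r x hx => by
        show (↑r : A) * x ∈ A1
        exact h01 r.1 ((hmemS r.1).mp r.2) x hx } with hN1
  have hspan : Submodule.span ↥S (s : Set A) = N1 := by
    refine le_antisymm (Submodule.span_le.mpr (fun b hb => hs1 hb)) ?_
    intro x hx
    have hx2 := hs2 hx
    have hle : Submodule.span k {z | ∃ a ∈ A0, ∃ b ∈ (s : Set A), z = a * b} ≤
        (Submodule.span ↥S (s : Set A)).restrictScalars k := by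
      rw [Submodule.span_le]
      rintro z ⟨a, ha, b, hb, rfl⟩
      show a * b ∈ Submodule.span ↥S (s : Set A)
      have heq : a * b = (⟨a, (hmemS a).mpr ha⟩ : ↥S) • b := rfl
      rw [heq]
      exact Submodule.smul_mem _ _ (Submodule.subset_span hb)
    exact hle hx2
  haveI hNM : IsNoetherian ↥S ↥N1 := isNoetherian_of_fg_of_noetherian N1 ⟨s, hspan⟩
  -- now the main argument
  intro f hsi hmono
  set vS : ↥S →ₗ[↥S] A :=
    { toFun := Subtype.val, map_add' := fun _ _ => rfl, map_smul' := fun _ _ => rfl } with hvS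
  set F' : ℕ → Submodule ↥S A := fun n =>
    { carrier := (f n : Set A)
      add_mem' := fun {a b} ha hb => (f n).add_mem ha hb
      zero_mem' := (f n).zero_mem
      smul_mem' := fun r x hx => by
        show (↑r : A) * x ∈ f n
        exact ((hsi n).1 x hx r.1).1 } with hF'
  set E : ℕ →o Ideal ↥S :=
    ⟨fun n => Submodule.comap vS (F' n), fun a b hab x hx => hmono hab hx⟩ with hE
  set O : ℕ →o Submodule ↥S ↥N1 :=
    ⟨fun n => Submodule.comap N1.subtype (F' n), fun a b hab x hx => hmono hab hx⟩ with hO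
  obtain ⟨n0, h0⟩ := monotone_stabilizes_iff_noetherian.mpr (isNoetherianRing_iff.mp hNR) E
  obtain ⟨n1, h1⟩ := monotone_stabilizes_iff_noetherian.mpr hNM O
  refine ⟨max n0 n1, fun m hm => ?_⟩
  refine le_antisymm ?_ (hmono hm)
  intro x hx
  obtain ⟨a, ha, b, hb, rfl⟩ := aux_decomp hsum x
  obtain ⟨haf, hbf⟩ := (hsi m).2 a ha b hb hx
  have hEa : (⟨a, (hmemS a).mpr ha⟩ : ↥S) ∈ E m := haf
  have hOb : (⟨b, hb⟩ : ↥N1) ∈ O m := hbf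
  have hEa' : (⟨a, (hmemS a).mpr ha⟩ : ↥S) ∈ E (max n0 n1) := by
    rw [← h0 m (le_trans (le_max_left _ _) hm)] at hEa
    rw [← h0 (max n0 n1) (le_max_left _ _)]
    exact hEa
  have hOb' : (⟨b, hb⟩ : ↥N1) ∈ O (max n0 n1) := by
    rw [← h1 m (le_trans (le_max_right _ _) hm)] at hOb
    rw [← h1 (max n0 n1) (le_max_right _ _)]
    exact hOb
  have haf' : a ∈ f (max n0 n1) := hEa'
  have hbf' : b ∈ f (max n0 n1) := hOb'
  exact Submodule.add_mem _ haf' hbf'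

/-- A supercommutative superalgebra `A = A₀ ⊕ A₁` over a field of
characteristic ≠ 2 is Noetherian (ACC on super-ideals) iff `A₀` is a Noetherian
commutative ring (ACC on its ideals) and `A₁` is a finitely generated `A₀`-module. -/
theorem superNoetherian_iff
    (k A : Type) [Field k] [Ring A] [Algebra k A]
    (hchar : (2 : k) ≠ 0)
    (A0 A1 : Submodule k A)
    (hsum : A0 ⊔ A1 = ⊤) (hdisj : A0 ⊓ A1 = ⊥)
    (hone : (1 : A) ∈ A0)
    (h00 : ∀ a ∈ A0, ∀ b ∈ A0, a * b ∈ A0)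
    (h01 : ∀ a ∈ A0, ∀ b ∈ A1, a * b ∈ A1)
    (h11 : ∀ a ∈ A1, ∀ b ∈ A1, a * b ∈ A0)
    (hcentral : ∀ a ∈ A0, ∀ x : A, a * x = x * a)
    (hanti : ∀ a ∈ A1, ∀ b ∈ A1, a * b = -(b * a)) :
    SuperNoetherian k A A0 A1 ↔
      ((∀ f : ℕ → Submodule k A,
          (∀ n, f n ≤ A0 ∧ ∀ a ∈ A0, ∀ x ∈ f n, a * x ∈ f n) → Monotone f →
          ∃ n, ∀ m, n ≤ m → f m = f n)
        ∧ (∃ s : Finset A, (s : Set A) ⊆ (A1 : Set A) ∧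
            A1 ≤ Submodule.span k {z | ∃ a ∈ A0, ∃ b ∈ (s : Set A), z = a * b})) := by
  constructor
  · intro hN
    exact ⟨fun f hf hm => fwd1 hsum hdisj h01 h11 hcentral hanti hN f hf hm,
      fwd2 hsum hdisj hone h00 h01 h11 hcentral hanti hN⟩
  · rintro ⟨hacc, s, hs1, hs2⟩
    exact bwd hsum hdisj hone h00 h01 hacc s hs1 hs2
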